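/- arXiv:2605.23501 — 2 statements merged into one kernel-verified Lean document; each statement's English description precedes it below -/
import Mathlib

section
/- Let ω ∈ L¹(-1,1) with ω(t) > 0 almost everywhere on (-1,1), and let -1 = x₀ < x₁ < ⋯ < x_N = 1. Then for any data η₁,…,η_N ∈ ℝ there exists a unique polynomial p of degree ≤ N-1 such that (1/h_i) ∫_{x_{i-1}}^{x_i} p(t) ω(t) dt = η_i for all i = 1,…,N, where h_i = x_i - x_{i-1}. -/
open MeasureTheory

/-- A strictly a.e.-positive integrable function on a set of positive measure has a
strictly positive integral. -/
lemma aux_setIntegral_pos {s : Set ℝ} (hμ : 0 < volume s) {f : ℝ → ℝ}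
    (hf : IntegrableOn f s) (hfpos : ∀ᵐ t ∂(volume.restrict s), 0 < f t) :
    0 < ∫ t in s, f t := by
  set μ := volume.restrict s with hμdef
  rw [MeasureTheory.integral_pos_iff_support_of_nonneg_ae
    (hfpos.mono fun t ht => ht.le) hf]
  have h2 : ∀ᵐ t ∂μ, t ∈ Function.support f := hfpos.mono fun t ht => ne_of_gt ht
  have h3 : μ (Function.support f)ᶜ = 0 := by
    rw [ae_iff] at h2
    exact h2
  have h4 : μ Set.univ ≤ μ (Function.support f) + μ (Function.support f)ᶜ := by
    rw [← Set.union_compl_self (Function.support f)]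
    exact measure_union_le _ _
  rw [h3, add_zero] at h4
  have h5 : μ Set.univ = volume s := Measure.restrict_apply_univ s
  rw [h5] at h4
  exact lt_of_lt_of_le hμ h4

/-- Unisolvence of weighted histopolation: given an integrable weight `ω` positive a.e. on
`(-1,1)`, nodes `-1 = x₀ < ⋯ < x_N = 1`, and data `η`, there is a unique polynomial of degree
at most `N-1` whose weighted cell averages match the data. -/
theorem weighted_histopolation_unisolvent (N : ℕ) (hN : 0 < N)
    (x : Fin (N + 1) → ℝ) (hx : StrictMono x)
    (hx0 : x 0 = -1) (hxN : x (Fin.last N) = 1)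
    (ω : ℝ → ℝ) (hω : IntegrableOn ω (Set.Ioo (-1 : ℝ) 1))
    (hpos : ∀ᵐ t ∂(volume.restrict (Set.Ioo (-1 : ℝ) 1)), 0 < ω t)
    (η : Fin N → ℝ) :
    ∃! p : Polynomial ℝ, p.degree < (N : WithBot ℕ) ∧
      ∀ i : Fin N,
        (1 / (x i.succ - x i.castSucc)) *
          ∫ t in (x i.castSucc)..(x i.succ), p.eval t * ω t = η i := by
  have hmono := hx.monotone
  have hab : ∀ i : Fin N, x i.castSucc < x i.succ := fun i => hx Fin.castSucc_lt_succ
  have hsub : ∀ i : Fin N,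
      Set.Ioo (x i.castSucc) (x i.succ) ⊆ Set.Ioo (-1 : ℝ) 1 := by
    intro i t ht
    constructor
    · calc (-1 : ℝ) = x 0 := hx0.symm
        _ ≤ x i.castSucc := hmono (Fin.zero_le _)
        _ < t := ht.1
    · calc t < x i.succ := ht.2
        _ ≤ x (Fin.last N) := hmono (Fin.le_last _)
        _ = 1 := hxN
  have hIcc : ∀ i : Fin N,
      Set.Ioo (x i.castSucc) (x i.succ) ⊆ Set.Icc (-1 : ℝ) 1 :=
    fun i => (hsub i).trans Set.Ioo_subset_Icc_self
  -- integrability of `p * ω` on each cell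
  have hInt : ∀ (p : Polynomial ℝ) (i : Fin N),
      IntegrableOn (fun t => p.eval t * ω t) (Set.Ioo (x i.castSucc) (x i.succ)) := by
    intro p i
    obtain ⟨C, hC⟩ := (isCompact_Icc (a := (-1 : ℝ)) (b := 1)).exists_bound_of_continuousOn
      (p.continuous).continuousOn
    refine Integrable.bdd_mul (c := C) (hω.mono_set (hsub i)) ?_ ?_
    · exact (p.continuous).aestronglyMeasurable
    · filter_upwards [ae_restrict_mem measurableSet_Ioo] with t ht
      exact hC t (hIcc i ht)
  have hII : ∀ (p : Polynomial ℝ) (i : Fin N),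
      IntervalIntegrable (fun t => p.eval t * ω t) volume (x i.castSucc) (x i.succ) :=
    fun p i => (intervalIntegrable_iff_integrableOn_Ioo_of_le (hab i).le).mpr (hInt p i)
  -- the linear map of weighted cell averages
  let L : Polynomial.degreeLT ℝ N →ₗ[ℝ] (Fin N → ℝ) :=
    { toFun := fun p i => (1 / (x i.succ - x i.castSucc)) *
        ∫ t in (x i.castSucc)..(x i.succ), (p : Polynomial ℝ).eval t * ω t
      map_add' := by
        intro p q
        funext i
        simp only [Submodule.coe_add, Polynomial.eval_add, add_mul, Pi.add_apply]
        rw [intervalIntegral.integral_add (hII p i) (hII q i)]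
        ring
      map_smul' := by
        intro c p
        funext i
        simp only [SetLike.val_smul, Polynomial.eval_smul, smul_eq_mul, RingHom.id_apply,
          Pi.smul_apply, mul_assoc]
        rw [intervalIntegral.integral_const_mul]
        ring }
  -- key injectivity fact
  have key : ∀ p : Polynomial ℝ, p ∈ Polynomial.degreeLT ℝ N →
      (∀ i : Fin N, ∫ t in (x i.castSucc)..(x i.succ), p.eval t * ω t = 0) → p = 0 := by
    intro p hp hint0
    by_cases hp0 : p = 0
    · exact hp0
    exfalso
    have hint0' : ∀ i : Fin N,
        ∫ t in Set.Ioo (x i.castSucc) (x i.succ), p.eval t * ω t = 0 := by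
      intro i
      rw [← MeasureTheory.integral_Ioc_eq_integral_Ioo,
        ← intervalIntegral.integral_of_le (hab i).le]
      exact hint0 i
    have hroot : ∀ i : Fin N,
        ∃ r ∈ Set.Ioo (x i.castSucc) (x i.succ), p.eval r = 0 := by
      intro i
      by_contra hcon
      push_neg at hcon
      set c : ℝ := (x i.castSucc + x i.succ) / 2 with hc_def
      have hc : c ∈ Set.Ioo (x i.castSucc) (x i.succ) :=
        ⟨by have := hab i; simp only [hc_def]; linarith,
         by have := hab i; simp only [hc_def]; linarith⟩
      have hivt : ∀ t ∈ Set.Ioo (x i.castSucc) (x i.succ),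
          (0 < p.eval c → 0 < p.eval t) ∧ (p.eval c < 0 → p.eval t < 0) := by
        intro t ht
        have hzero : ∀ u v : ℝ, u ∈ Set.Ioo (x i.castSucc) (x i.succ) →
            v ∈ Set.Ioo (x i.castSucc) (x i.succ) →
            p.eval u < 0 → 0 < p.eval v → False := by
          intro u v hu hv hun hvp
          have h0 : (0 : ℝ) ∈ Set.uIcc (p.eval u) (p.eval v) := by
            rw [Set.mem_uIcc]
            left
            exact ⟨hun.le, hvp.le⟩
          obtain ⟨r, hr, hr0⟩ := intermediate_value_uIcc
            ((p.continuous).continuousOn (s := Set.uIcc u v)) h0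
          have hrIoo : r ∈ Set.Ioo (x i.castSucc) (x i.succ) :=
            (Set.ordConnected_Ioo).uIcc_subset hu hv hr
          exact hcon r hrIoo hr0
        constructor
        · intro hcp
          rcases (Ne.lt_or_gt (hcon t ht)) with h' | h'
          · exact absurd (hzero t c ht hc h' hcp) not_false
          · exact h'
        · intro hcn
          rcases (Ne.lt_or_gt (hcon t ht)) with h' | h'
          · exact h'
          · exact absurd (hzero c t hc ht hcn h') not_false
      have hμpos : 0 < volume (Set.Ioo (x i.castSucc) (x i.succ)) := by
        rw [Real.volume_Ioo]
        exact ENNReal.ofReal_pos.mpr (sub_pos.mpr (hab i))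
      have hωpos : ∀ᵐ t ∂(volume.restrict (Set.Ioo (x i.castSucc) (x i.succ))), 0 < ω t :=
        (ae_mono (Measure.restrict_mono (hsub i) le_rfl)) hpos
      rcases (Ne.lt_or_gt (hcon c hc)) with hcn | hcp
      · -- p < 0 on the cell, so the integral of -(p ω) is positive
        have hposint : 0 < ∫ t in Set.Ioo (x i.castSucc) (x i.succ), -(p.eval t * ω t) := by
          apply aux_setIntegral_pos hμpos (hInt p i).neg
          filter_upwards [hωpos, ae_restrict_mem measurableSet_Ioo] with t hω' ht
          have h' := (hivt t ht).2 hcn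
          show (0:ℝ) < -(Polynomial.eval t p * ω t)
          nlinarith [mul_pos (neg_pos.mpr h') hω']
        rw [MeasureTheory.integral_neg, hint0' i, neg_zero] at hposint
        exact lt_irrefl 0 hposint
      · have hposint : 0 < ∫ t in Set.Ioo (x i.castSucc) (x i.succ), p.eval t * ω t := by
          apply aux_setIntegral_pos hμpos (hInt p i)
          filter_upwards [hωpos, ae_restrict_mem measurableSet_Ioo] with t hω' ht
          exact mul_pos ((hivt t ht).1 hcp) hω'
        rw [hint0' i] at hposint
        exact lt_irrefl 0 hposint
    choose r hrmem hr0 using hroot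
    have hrinj : Function.Injective r := by
      have hlt : ∀ i j : Fin N, i < j → r i < r j := by
        intro i j hij
        have hij' : (i : ℕ) < (j : ℕ) := hij
        have h1 : (i.succ : Fin (N + 1)) ≤ j.castSucc := by
          simp only [Fin.le_def, Fin.val_succ, Fin.coe_castSucc]
          omega
        calc r i < x i.succ := (hrmem i).2
          _ ≤ x j.castSucc := hmono h1
          _ < r j := (hrmem j).1
      intro i j hij
      rcases lt_trichotomy i j with h | h | h
      · exact absurd hij (ne_of_lt (hlt i j h))
      · exact h
      · exact absurd hij.symm (ne_of_lt (hlt j i h))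
    have hdeg : p.natDegree < N := by
      rw [Polynomial.mem_degreeLT] at hp
      exact (Polynomial.natDegree_lt_iff_degree_lt hp0).mpr hp
    exact hp0 (Polynomial.eq_zero_of_natDegree_lt_card_of_eval_eq_zero p hrinj hr0
      (by simpa using hdeg))
  -- injectivity of L
  have hinj : Function.Injective L := by
    rw [← LinearMap.ker_eq_bot, LinearMap.ker_eq_bot']
    intro p hLp
    have hval : (p : Polynomial ℝ) = 0 := by
      apply key p p.2
      intro i
      have hi := congrFun hLp i
      have hne : (1 : ℝ) / (x i.succ - x i.castSucc) ≠ 0 :=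
        one_div_ne_zero (sub_ne_zero.mpr (hab i).ne')
      have : (1 / (x i.succ - x i.castSucc)) *
          ∫ t in (x i.castSucc)..(x i.succ), (p : Polynomial ℝ).eval t * ω t = 0 := hi
      rcases mul_eq_zero.mp this with h | h
      · exact absurd h hne
      · exact h
    exact Subtype.ext hval
  -- dimension count gives surjectivity
  haveI : FiniteDimensional ℝ (Polynomial.degreeLT ℝ N) :=
    LinearEquiv.finiteDimensional (Polynomial.degreeLTEquiv ℝ N).symm
  have hfr : Module.finrank ℝ (Polynomial.degreeLT ℝ N) = Module.finrank ℝ (Fin N → ℝ) :=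
    (Polynomial.degreeLTEquiv ℝ N).finrank_eq
  have hsurj : Function.Surjective L :=
    (LinearMap.injective_iff_surjective_of_finrank_eq_finrank hfr).mp hinj
  obtain ⟨q, hq⟩ := hsurj η
  refine ⟨(q : Polynomial ℝ), ⟨Polynomial.mem_degreeLT.mp q.2, fun i => congrFun hq i⟩, ?_⟩
  rintro p' ⟨hdeg', heq'⟩
  have hp'mem : p' ∈ Polynomial.degreeLT ℝ N := Polynomial.mem_degreeLT.mpr hdeg'
  have hLp' : L ⟨p', hp'mem⟩ = η := funext fun i => heq' i
  have := hinj (hLp'.trans hq.symm)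
  exact congrArg Subtype.val this
end

section
/- Let ω ∈ L¹(-1,1) with ω > 0 a.e., and let -1 = x₀ < ⋯ < x_N = 1. If a polynomial p of degree ≤ N-1 satisfies ∫_{x_{i-1}}^{x_i} p(t) ω(t) dt = 0 for all i = 1,…,N, then p = 0. -/
open MeasureTheory

lemma histo_integrable (ω : ℝ → ℝ) (hω : IntegrableOn ω (Set.Ioo (-1 : ℝ) 1))
    (a b : ℝ) (hsub : Set.Ioo a b ⊆ Set.Ioo (-1 : ℝ) 1) (p : Polynomial ℝ) :
    IntegrableOn (fun t => p.eval t * ω t) (Set.Ioo a b) := by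
  have hω' : IntegrableOn ω (Set.Ioo a b) := hω.mono_set hsub
  obtain ⟨C, hC⟩ := (isCompact_Icc (a := a) (b := b)).exists_bound_of_continuousOn
    p.continuous_aeval.continuousOn
  refine Integrable.bdd_mul (c := C) hω'
    (p.continuous_aeval.aestronglyMeasurable.restrict) ?_
  filter_upwards [ae_restrict_mem measurableSet_Ioo] with t ht
  exact hC t (Set.mem_Icc_of_Ioo ht)

lemma histo_pos (ω : ℝ → ℝ) (hω : IntegrableOn ω (Set.Ioo (-1 : ℝ) 1))
    (hpos : ∀ᵐ t ∂(volume.restrict (Set.Ioo (-1 : ℝ) 1)), 0 < ω t)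
    (a b : ℝ) (hab : a < b) (hsub : Set.Ioo a b ⊆ Set.Ioo (-1 : ℝ) 1)
    (p : Polynomial ℝ) (hp : ∀ t ∈ Set.Ioo a b, 0 < p.eval t) :
    ∫ t in a..b, p.eval t * ω t ≠ 0 := by
  have hInt := histo_integrable ω hω a b hsub p
  have hpos' : ∀ᵐ t ∂(volume.restrict (Set.Ioo a b)), 0 < p.eval t * ω t := by
    filter_upwards [ae_restrict_of_ae_restrict_of_subset hsub hpos,
      ae_restrict_mem measurableSet_Ioo] with t h1 h2
    exact mul_pos (hp t h2) h1
  intro h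
  rw [intervalIntegral.integral_of_le hab.le, integral_Ioc_eq_integral_Ioo] at h
  have hzero : (fun t => p.eval t * ω t) =ᵐ[volume.restrict (Set.Ioo a b)] 0 := by
    rw [← integral_eq_zero_iff_of_nonneg_ae (hpos'.mono fun t ht => ht.le) hInt]
    exact h
  have hfalse : ∀ᵐ t ∂(volume.restrict (Set.Ioo a b)), False := by
    filter_upwards [hpos', hzero] with t h1 h2
    simp only [Pi.zero_apply] at h2
    linarith
  rw [ae_iff] at hfalse
  simp only [not_false_iff, Set.setOf_true, Measure.restrict_apply_univ,
    Real.volume_Ioo, ENNReal.ofReal_eq_zero] at hfalse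
  linarith

lemma histo_root (ω : ℝ → ℝ) (hω : IntegrableOn ω (Set.Ioo (-1 : ℝ) 1))
    (hpos : ∀ᵐ t ∂(volume.restrict (Set.Ioo (-1 : ℝ) 1)), 0 < ω t)
    (a b : ℝ) (hab : a < b) (hsub : Set.Ioo a b ⊆ Set.Ioo (-1 : ℝ) 1)
    (p : Polynomial ℝ) (h : ∫ t in a..b, p.eval t * ω t = 0) :
    ∃ r ∈ Set.Ioo a b, p.eval r = 0 := by
  by_contra hc
  push_neg at hc
  -- p has constant sign on Ioo a b
  have hsign : (∀ t ∈ Set.Ioo a b, 0 < p.eval t) ∨ (∀ t ∈ Set.Ioo a b, p.eval t < 0) := by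
    set m := (a + b) / 2 with hm
    have hmmem : m ∈ Set.Ioo a b := ⟨by simp [hm]; linarith, by simp [hm]; linarith⟩
    have hivt : ∀ t ∈ Set.Ioo a b, ∀ s ∈ Set.Ioo a b, 0 < p.eval t → p.eval s < 0 → False := by
      intro t ht s hs h1 h2
      have huIcc : Set.uIcc t s ⊆ Set.Ioo a b :=
        (Set.ordConnected_Ioo).uIcc_subset ht hs
      have : (0 : ℝ) ∈ Set.uIcc (p.eval t) (p.eval s) := by
        rw [Set.mem_uIcc]; right; exact ⟨h2.le, h1.le⟩
      obtain ⟨c, hc1, hc2⟩ := intermediate_value_uIcc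
        (f := fun t => p.eval t) (p.continuous_aeval.continuousOn) this
      exact hc c (huIcc hc1) hc2
    rcases lt_or_gt_of_ne (hc m hmmem) with hlt | hgt
    · right
      intro t ht
      rcases lt_or_gt_of_ne (hc t ht) with h' | h'
      · exact h'
      · exact absurd (hivt t ht m hmmem h' hlt) (by simp)
    · left
      intro t ht
      rcases lt_or_gt_of_ne (hc t ht) with h' | h'
      · exact absurd (hivt m hmmem t ht hgt h') (by simp)
      · exact h'
  rcases hsign with hsign | hsign
  · exact histo_pos ω hω hpos a b hab hsub p hsign h
  · refine histo_pos ω hω hpos a b hab hsub (-p) ?_ ?_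
    · intro t ht
      simpa using hsign t ht
    · have : ∀ t, (-p).eval t * ω t = -(p.eval t * ω t) := by intro t; simp
      simp only [this, intervalIntegral.integral_neg, h, neg_zero]

/-- Injectivity step for weighted histopolation: if a polynomial of degree at most `N-1` has
vanishing weighted averages on each cell of a partition of `[-1,1]`, then it is zero. -/
theorem weighted_histopolation_injective (N : ℕ) (hN : 0 < N)
    (x : Fin (N + 1) → ℝ) (hx : StrictMono x)
    (hx0 : x 0 = -1) (hxN : x (Fin.last N) = 1)
    (ω : ℝ → ℝ) (hω : IntegrableOn ω (Set.Ioo (-1 : ℝ) 1))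
    (hpos : ∀ᵐ t ∂(volume.restrict (Set.Ioo (-1 : ℝ) 1)), 0 < ω t)
    (p : Polynomial ℝ) (hdeg : p.degree < (N : WithBot ℕ))
    (hzero : ∀ i : Fin N, ∫ t in (x i.castSucc)..(x i.succ), p.eval t * ω t = 0) :
    p = 0 := by
  by_contra hp
  -- each cell contains a root
  have hroot : ∀ i : Fin N, ∃ r ∈ Set.Ioo (x i.castSucc) (x i.succ), p.eval r = 0 := by
    intro i
    refine histo_root ω hω hpos _ _ (hx (Fin.castSucc_lt_succ (i := i))) ?_ p (hzero i)
    intro t ht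
    constructor
    · calc (-1 : ℝ) = x 0 := hx0.symm
        _ ≤ x i.castSucc := hx.monotone (Fin.zero_le _)
        _ < t := ht.1
    · calc t < x i.succ := ht.2
        _ ≤ x (Fin.last N) := hx.monotone (Fin.le_last _)
        _ = 1 := hxN
  choose r hr hr0 using hroot
  -- r is injective (in fact strictly monotone)
  have hrmono : StrictMono r := by
    intro i j hij
    calc r i < x i.succ := (hr i).2
      _ ≤ x j.castSucc := hx.monotone (by
          simp [Fin.succ_le_castSucc_iff]
          exact hij)
      _ < r j := (hr j).1
  -- so p has at least N roots, but natDegree < N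
  have hnd : p.natDegree < N := by
    rwa [Polynomial.degree_eq_natDegree hp, Nat.cast_lt] at hdeg
  have hsub : Finset.univ.image r ⊆ p.roots.toFinset := by
    intro y hy
    simp only [Finset.mem_image] at hy
    obtain ⟨i, _, rfl⟩ := hy
    simp [Multiset.mem_toFinset, Polynomial.mem_roots, hp, hr0 i]
  have hcard : N ≤ p.roots.toFinset.card := by
    calc N = (Finset.univ.image r).card := by
          rw [Finset.card_image_of_injective _ hrmono.injective, Finset.card_univ,
            Fintype.card_fin]
      _ ≤ p.roots.toFinset.card := Finset.card_le_card hsub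
  have := p.roots.toFinset_card_le.trans (p.card_roots' : _)
  omega
end
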